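/- arXiv:1903.10613 — 2 statements merged into one kernel-verified Lean document; each statement's English description precedes it below -/
import Mathlib

section
/- Let n be an odd positive integer and let v ∈ 𝔽_2^n be a symmetric vector with v_0 = 0. Then v and ê work together. -/
/-- The cyclic shift operator on `𝔽₂ⁿ` (indexed by `ZMod n`): `(cshift x) i = x (i - 1)`. -/
def cshift {n : ℕ} (x : ZMod n → ZMod 2) : ZMod n → ZMod 2 := fun i => x (i - 1)

/-- The standard dot product over `𝔽₂`. -/
def dot {n : ℕ} [NeZero n] (v x : ZMod n → ZMod 2) : ZMod 2 := ∑ i, v i * x i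

/-- A vector `v ∈ 𝔽₂ⁿ` works if for every `x` some cyclic shift of `x` is orthogonal to `v`. -/
def Works {n : ℕ} [NeZero n] (v : ZMod n → ZMod 2) : Prop :=
  ∀ x : ZMod n → ZMod 2, ∃ k : ℕ, dot v (cshift^[k] x) = 0

/-- Two vectors `v, w ∈ 𝔽₂ⁿ` work together if for every `x` there is a single cyclic shift
of `x` orthogonal to both. -/
def WorkTogether2 {n : ℕ} [NeZero n] (v w : ZMod n → ZMod 2) : Prop :=
  ∀ x : ZMod n → ZMod 2, ∃ k : ℕ,
    dot v (cshift^[k] x) = 0 ∧ dot w (cshift^[k] x) = 0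

/-- The vector `ê ∈ 𝔽₂ⁿ` with `ê 0 = 0` and `ê i = 1` for `i ≠ 0`. -/
def ehat (n : ℕ) : ZMod n → ZMod 2 := fun i => if i = 0 then 0 else 1

lemma cshift_iterate {n : ℕ} (k : ℕ) (x : ZMod n → ZMod 2) (i : ZMod n) :
    (cshift^[k] x) i = x (i - (k : ZMod n)) := by
  induction k generalizing x i with
  | zero => simp
  | succ k ih =>
    rw [Function.iterate_succ_apply, ih]
    show x (i - (k:ZMod n) - 1) = _
    congr 1
    push_cast
    ring

lemma neg_self_eq_zero {n : ℕ} [NeZero n] (hn : Odd n) (a : ZMod n) (h : a = -a) : a = 0 := by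
  have h2 : IsUnit (2 : ZMod n) := by
    rw [show (2 : ZMod n) = ((2:ℕ) : ZMod n) by push_cast; ring, ZMod.isUnit_iff_coprime]
    exact Nat.coprime_two_left.mpr hn
  have he : (2 : ZMod n) * a = 0 := by
    rw [two_mul]; nth_rewrite 2 [h]; exact add_neg_cancel a
  exact (h2.mul_right_eq_zero).mp he

/-- For `n` odd, every symmetric vector `v ∈ 𝔽₂ⁿ` with `v 0 = 0` works together with `ê`. -/
theorem symmetric_works_with_ehat (n : ℕ) [NeZero n] (hn : Odd n)
    (v : ZMod n → ZMod 2) (h0 : v 0 = 0) (hsym : ∀ i : ZMod n, v i = v (-i)) :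
    WorkTogether2 v (ehat n) := by
  intro x
  by_contra hcon
  push_neg at hcon
  set S := ∑ j, x j with hS
  set V := ∑ i, v i with hV
  set F : ZMod n → ZMod 2 := fun k => ∑ i, v i * x (i - k) with hF
  -- translate the two dot products
  have hdotv : ∀ k₀ : ZMod n, dot v (cshift^[k₀.val] x) = F k₀ := by
    intro k₀
    simp only [dot, hF]
    refine Finset.sum_congr rfl fun i _ => ?_
    rw [cshift_iterate, ZMod.natCast_rightInverse k₀]
  have hsub : ∀ k₀ : ZMod n, ∑ i, x (i - k₀) = S := by
    intro k₀
    exact Fintype.sum_equiv (Equiv.subRight k₀) _ _ (fun i => rfl)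
  have hdote : ∀ k₀ : ZMod n, dot (ehat n) (cshift^[k₀.val] x) = S + x (-k₀) := by
    intro k₀
    have h1 : ∀ i : ZMod n, (ehat n i) * (cshift^[k₀.val] x i)
        = x (i - k₀) + (if i = 0 then x (i - k₀) else 0) := by
      intro i
      rw [cshift_iterate, ZMod.natCast_rightInverse k₀]
      by_cases hi : i = 0 <;> simp [ehat, hi, CharTwo.add_self_eq_zero]
    rw [dot]
    simp only [h1]
    rw [Finset.sum_add_distrib, hsub k₀, Finset.sum_ite_eq' Finset.univ 0 (fun i => x (i - k₀))]
    simp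
  -- the contradiction hypothesis, indexed by ZMod n
  have hk : ∀ k₀ : ZMod n, ¬(F k₀ = 0 ∧ S + x (-k₀) = 0) := by
    intro k₀ ⟨ha, hb⟩
    exact hcon k₀.val ((hdotv k₀).trans ha) ((hdote k₀).trans hb)
  -- Key identity 1 : ∑ k, F k = V * S
  have key1 : ∑ k, F k = V * S := by
    rw [hF, Finset.sum_comm]
    have h2 : ∀ i : ZMod n, ∑ k, v i * x (i - k) = v i * S := by
      intro i
      rw [← Finset.mul_sum]
      congr 1
      exact Fintype.sum_equiv (Equiv.subLeft i) _ _ (fun k => rfl)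
    simp only [h2]
    rw [← Finset.sum_mul]
  -- Key identity 2 : ∑ k, F k * x (-k) = 0
  have key2 : ∑ k, F k * x (-k) = 0 := by
    set g : ZMod n → ZMod 2 := fun i => ∑ j, x (i + j) * x j with hg
    have hswap : ∑ k, F k * x (-k) = ∑ i, v i * g i := by
      simp only [hF, hg, Finset.sum_mul, Finset.mul_sum]
      rw [Finset.sum_comm]
      refine Finset.sum_congr rfl fun i _ => ?_
      refine Fintype.sum_equiv (Equiv.neg (ZMod n)) _ _ (fun k => ?_)
      show v i * x (i - k) * x (-k) = v i * (x (i + -k) * x (-k))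
      rw [sub_eq_add_neg, mul_assoc]
    have hgsym : ∀ i, g (-i) = g i := by
      intro i
      refine Fintype.sum_equiv (Equiv.subRight i) _ _ (fun j => ?_)
      show x (-i + j) * x j = x (i + (j - i)) * x (j - i)
      rw [show i + (j - i) = j by ring, show -i + j = j - i by ring, mul_comm]
    rw [hswap]
    refine Finset.sum_involution (fun i _ => -i) (fun i _ => ?_) (fun i _ hne => ?_)
      (fun i _ => Finset.mem_univ _) (fun i _ => neg_neg i)
    · show v i * g i + v (-i) * g (-i) = 0
      rw [← hsym i, hgsym i, CharTwo.add_self_eq_zero]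
    · show ¬ -i = i
      intro heq
      rw [neg_self_eq_zero hn i heq.symm, h0, zero_mul] at hne
      exact hne rfl
  -- pointwise consequence of hk
  have hpt : ∀ k : ZMod n, F k * (1 + (S + x (-k))) = 1 + (S + x (-k)) := by
    intro k
    have hd : ∀ a b : ZMod 2, ¬(a = 0 ∧ b = 0) → a * (1 + b) = 1 + b := by decide
    exact hd _ _ (hk k)
  have hsumneg : ∑ k : ZMod n, x (-k) = S :=
    Fintype.sum_equiv (Equiv.neg (ZMod n)) _ _ (fun k => rfl)
  have hcard : ((Fintype.card (ZMod n) : ℕ) : ZMod 2) = 1 := by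
    rw [ZMod.card]
    obtain ⟨m, hm⟩ := hn
    subst hm
    push_cast
    rw [show ((2:ZMod 2)) = 0 by decide]
    ring
  -- sum the pointwise identity
  have expand1 : ∑ k : ZMod n, F k * (1 + (S + x (-k))) = V*S + ((V*S)*S + 0) := by
    simp only [mul_add, mul_one]
    rw [Finset.sum_add_distrib, Finset.sum_add_distrib, ← Finset.sum_mul, key1, key2]
  have expand2 : ∑ k : ZMod n, (1 + (S + x (-k))) = 1 + (S + S) := by
    rw [Finset.sum_add_distrib, Finset.sum_add_distrib, hsumneg, Finset.sum_const,
      Finset.sum_const, Finset.card_univ, nsmul_eq_mul, nsmul_eq_mul, hcard, one_mul, one_mul]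
  have heq : V*S + ((V*S)*S + 0) = 1 + (S + S) := by
    rw [← expand1, ← expand2]
    exact Finset.sum_congr rfl (fun k _ => hpt k)
  have : ∀ a b : ZMod 2, a*b + ((a*b)*b + 0) ≠ 1 + (b + b) := by decide
  exact this V S heq
end

section
/- Let p > 3 be a prime and let v ∈ 𝔽_2^p be a nonzero symmetric vector with v ≠ ê. If w ∈ 𝔽_2^p is any vector such that ê, v and w work together, then w lies in the linear span of ê and v. -/
/-- Three vectors `u, v, w ∈ 𝔽₂ⁿ` work together if for every `x` there is a single cyclic
shift of `x` orthogonal to all three. -/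
def WorkTogether3 {n : ℕ} [NeZero n] (u v w : ZMod n → ZMod 2) : Prop :=
  ∀ x : ZMod n → ZMod 2, ∃ k : ℕ,
    dot u (cshift^[k] x) = 0 ∧ dot v (cshift^[k] x) = 0 ∧ dot w (cshift^[k] x) = 0

lemma shift_apply {n : ℕ} (x : ZMod n → ZMod 2) (k : ℕ) (i : ZMod n) :
    (cshift^[k] x) i = x (i - (k : ZMod n)) := by
  induction k generalizing i with
  | zero => simp
  | succ m ih =>
    rw [Function.iterate_succ_apply']
    show (cshift^[m] x) (i - 1) = _
    rw [ih]
    congr 1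
    push_cast
    ring

lemma char2_eq_of_add_eq_zero : ∀ a b : ZMod 2, a + b = 0 → a = b := by decide

lemma zmod2_cases : ∀ a : ZMod 2, a = 0 ∨ a = 1 := by decide

section dots
variable {p : ℕ} [NeZero p]

lemma dot_ind1 (u : ZMod p → ZMod 2) (k : ZMod p) :
    (∑ i, u i * (if i - k = 0 then (1 : ZMod 2) else 0)) = u k := by
  have h : ∀ i : ZMod p, (i - k = 0) ↔ i ∈ ({k} : Finset (ZMod p)) := by
    intro i; simp [sub_eq_zero]
  calc (∑ i, u i * (if i - k = 0 then (1 : ZMod 2) else 0))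
      = ∑ i, (if i ∈ ({k} : Finset (ZMod p)) then u i else 0) := by
        apply Finset.sum_congr rfl; intro i _
        rw [mul_ite, mul_one, mul_zero]
        exact if_congr (h i) rfl rfl
    _ = ∑ i ∈ (Finset.univ ∩ {k}), u i := by rw [Finset.sum_ite_mem]
    _ = u k := by rw [Finset.univ_inter, Finset.sum_singleton]

lemma dot_ind3 (u : ZMod p → ZMod 2) (s t k : ZMod p) (hs : s ≠ 0) (ht : t ≠ 0) (hst : s ≠ t) :
    (∑ i, u i * (if i - k = 0 ∨ i - k = s ∨ i - k = t then (1 : ZMod 2) else 0))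
      = u k + u (s + k) + u (t + k) := by
  have h : ∀ i : ZMod p, (i - k = 0 ∨ i - k = s ∨ i - k = t)
      ↔ i ∈ ({k, s + k, t + k} : Finset (ZMod p)) := by
    intro i; simp [sub_eq_zero, sub_eq_iff_eq_add]
  calc (∑ i, u i * (if i - k = 0 ∨ i - k = s ∨ i - k = t then (1 : ZMod 2) else 0))
      = ∑ i, (if i ∈ ({k, s + k, t + k} : Finset (ZMod p)) then u i else 0) := by
        apply Finset.sum_congr rfl; intro i _
        rw [mul_ite, mul_one, mul_zero]
        exact if_congr (h i) rfl rfl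
    _ = ∑ i ∈ (Finset.univ ∩ {k, s + k, t + k}), u i := by rw [Finset.sum_ite_mem]
    _ = u k + u (s + k) + u (t + k) := by
        rw [Finset.univ_inter]
        rw [Finset.sum_insert (by simp [hs, ht, left_eq_add]), Finset.sum_insert (by simp [sub_eq_iff_eq_add, hst]),
          Finset.sum_singleton, add_assoc]

end dots

section derive
variable {p : ℕ} [NeZero p]

lemma work_single (u : ZMod p → ZMod 2) (k' : ℕ) :
    dot u (cshift^[k'] (fun j => if j = (0 : ZMod p) then (1 : ZMod 2) else 0))
      = u (k' : ZMod p) := by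
  unfold dot
  have h : ∀ i : ZMod p,
      (cshift^[k'] (fun j => if j = (0 : ZMod p) then (1 : ZMod 2) else 0)) i
        = (if i - (k' : ZMod p) = 0 then (1 : ZMod 2) else 0) := fun i => by
    rw [shift_apply]
  simp_rw [h]
  exact dot_ind1 u _

lemma work_triple (u : ZMod p → ZMod 2) (s t : ZMod p) (hs : s ≠ 0) (ht : t ≠ 0)
    (hst : s ≠ t) (k' : ℕ) :
    dot u (cshift^[k'] (fun j => if j = (0 : ZMod p) ∨ j = s ∨ j = t then (1 : ZMod 2) else 0))
      = u (k' : ZMod p) + u (s + (k' : ZMod p)) + u (t + (k' : ZMod p)) := by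
  unfold dot
  have h : ∀ i : ZMod p,
      (cshift^[k'] (fun j => if j = (0 : ZMod p) ∨ j = s ∨ j = t then (1 : ZMod 2) else 0)) i
        = (if i - (k' : ZMod p) = 0 ∨ i - (k' : ZMod p) = s ∨ i - (k' : ZMod p) = t
            then (1 : ZMod 2) else 0) := fun i => by
    rw [shift_apply]
  simp_rw [h]
  exact dot_ind3 u s t _ hs ht hst

lemma v0w0 (v w : ZMod p → ZMod 2) (hwork : WorkTogether3 (ehat p) v w) :
    v 0 = 0 ∧ w 0 = 0 := by
  obtain ⟨k, h1, h2, h3⟩ := hwork (fun j => if j = (0 : ZMod p) then (1 : ZMod 2) else 0)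
  rw [work_single] at h1 h2 h3
  have hk : (k : ZMod p) = 0 := by
    by_contra hne
    rw [show ehat p (k : ZMod p) = if (k : ZMod p) = 0 then 0 else 1 from rfl, if_neg hne] at h1
    exact one_ne_zero h1
  rw [hk] at h2 h3
  exact ⟨h2, h3⟩

lemma R1 (v w : ZMod p → ZMod 2) (hsym : ∀ i : ZMod p, v i = v (-i))
    (hv0 : v 0 = 0) (hw0 : w 0 = 0) (hwork : WorkTogether3 (ehat p) v w)
    (s t : ZMod p) (hs : s ≠ 0) (ht : t ≠ 0) (hst : s ≠ t)
    (hne : v (s - t) ≠ v s) (hne' : v (s - t) ≠ v t) : w s = w t := by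
  obtain ⟨k', h1, h2, h3⟩ :=
    hwork (fun j => if j = (0 : ZMod p) ∨ j = s ∨ j = t then (1 : ZMod 2) else 0)
  rw [work_triple _ s t hs ht hst] at h1 h2 h3
  set k := (k' : ZMod p) with hkdef
  have hcase : k = 0 ∨ s + k = 0 ∨ t + k = 0 := by
    by_contra hc
    push_neg at hc
    obtain ⟨c1, c2, c3⟩ := hc
    rw [show ehat p k = if k = 0 then 0 else 1 from rfl, if_neg c1,
      show ehat p (s + k) = if s + k = 0 then 0 else 1 from rfl, if_neg c2,
      show ehat p (t + k) = if t + k = 0 then 0 else 1 from rfl, if_neg c3] at h1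
    exact absurd h1 (by decide)
  rcases hcase with hk | hk | hk
  · rw [hk, add_zero, add_zero, hw0, zero_add] at h3
    exact char2_eq_of_add_eq_zero _ _ h3
  · exfalso
    have hk2 : k = -s := by
      have := eq_neg_of_add_eq_zero_right hk
      rw [this]
    rw [hk2, show s + -s = (0 : ZMod p) by ring, show t + -s = -(s - t) by ring,
      hv0, ← hsym s, ← hsym (s - t)] at h2
    have : v s = v (s - t) := char2_eq_of_add_eq_zero _ _ (by rw [← h2]; ring)
    exact hne this.symm
  · exfalso
    have hk2 : k = -t := by
      have := eq_neg_of_add_eq_zero_right hk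
      rw [this]
    rw [hk2, show t + -t = (0 : ZMod p) by ring, show s + -t = -(t - s) by ring,
      hv0, ← hsym t, ← hsym (t - s)] at h2
    have : v t = v (t - s) := char2_eq_of_add_eq_zero _ _ (by rw [← h2]; ring)
    rw [show t - s = -(s - t) by ring, ← hsym (s - t)] at this
    exact hne' this.symm

end derive

lemma core_aux (p : ℕ) (hp : p.Prime) (Z B C : ZMod p → Prop)
    (hpart : ∀ i, Z i ↔ (B i ∨ C i))
    (h0 : ¬ Z 0)
    (hcross : ∀ b c, B b → C c → Z (b - c))
    (hCne : ∃ c, C c)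
    (d : ZMod p) (hd0 : d ≠ 0) (hdZ : ¬ Z d) (hdZ' : ¬ Z (-d))
    (ℓ : ℕ) (hl2 : 2 ≤ ℓ) (x₀ : ZMod p)
    (hL : ∀ j : ℕ, j < ℓ → B (x₀ + (j : ZMod p) * d))
    (hmax : ∀ y : ZMod p, ¬ (∀ j : ℕ, j < ℓ + 1 → Z (y + (j : ZMod p) * d))) :
    False := by
  haveI : NeZero p := ⟨hp.pos.ne'⟩
  obtain ⟨c, hc⟩ := hCne
  have hc0 : c ≠ 0 := by
    intro h
    exact h0 (h ▸ (hpart c).2 (Or.inr hc))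
  -- no adjacent C pair in direction d
  have step2 : ∀ y : ZMod p, C y → ¬ C (y + d) := by
    intro y hy hyd
    have hx₀ : B x₀ := by simpa using hL 0 (by omega)
    apply hmax (x₀ - y - d)
    intro j hj
    cases j with
    | zero =>
      have := hcross x₀ (y + d) hx₀ hyd
      rw [show x₀ - y - d + ((0 : ℕ) : ZMod p) * d = x₀ - (y + d) by push_cast; ring]
      exact this
    | succ n =>
      have hn : n < ℓ := by omega
      have := hcross (x₀ + (n : ZMod p) * d) y (hL n hn) hy
      rw [show x₀ - y - d + ((n + 1 : ℕ) : ZMod p) * d = x₀ + (n : ZMod p) * d - y by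
        push_cast; ring]
      exact this
  have adjBC : ∀ y, B y → Z (y + d) → B (y + d) := by
    intro y hBy hZyd
    rcases (hpart _).1 hZyd with h | h
    · exact h
    · exact absurd (hcross y (y + d) hBy h) (by
        rw [show y - (y + d) = -d by ring]; exact hdZ')
  have adjCB : ∀ y, C y → Z (y + d) → C (y + d) := by
    intro y hCy hZyd
    rcases (hpart _).1 hZyd with h | h
    · exact absurd (hcross (y + d) y h hCy) (by
        rw [show y + d - y = d by ring]; exact hdZ)
    · exact h
  have mono : ∀ x : ZMod p, (∀ j : ℕ, j < ℓ → Z (x + (j : ZMod p) * d)) →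
      (∀ j : ℕ, j < ℓ → B (x + (j : ZMod p) * d)) ∨
      (∀ j : ℕ, j < ℓ → C (x + (j : ZMod p) * d)) := by
    intro x hI
    have h0x : Z (x + ((0 : ℕ) : ZMod p) * d) := hI 0 (by omega)
    rcases (hpart _).1 h0x with hB | hC
    · left
      intro j hj
      induction j with
      | zero => exact hB
      | succ n ih =>
        have hn : n < ℓ := by omega
        have hBn := ih hn
        have hZ : Z (x + ((n + 1 : ℕ) : ZMod p) * d) := hI _ hj
        have e : x + ((n + 1 : ℕ) : ZMod p) * d = (x + (n : ZMod p) * d) + d := by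
          push_cast; ring
        rw [e] at hZ ⊢
        exact adjBC _ hBn hZ
    · right
      intro j hj
      induction j with
      | zero => exact hC
      | succ n ih =>
        have hn : n < ℓ := by omega
        have hCn := ih hn
        have hZ : Z (x + ((n + 1 : ℕ) : ZMod p) * d) := hI _ hj
        have e : x + ((n + 1 : ℕ) : ZMod p) * d = (x + (n : ZMod p) * d) + d := by
          push_cast; ring
        rw [e] at hZ ⊢
        exact adjCB _ hCn hZ
  have step3 : ∀ k : ℕ, ∀ j : ℕ, j < ℓ → B (x₀ - (k : ZMod p) * c + (j : ZMod p) * d) := by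
    intro k
    induction k with
    | zero =>
      intro j hj
      rw [show x₀ - ((0 : ℕ) : ZMod p) * c + (j : ZMod p) * d = x₀ + (j : ZMod p) * d by
        push_cast; ring]
      exact hL j hj
    | succ n ih =>
      have hZall : ∀ j : ℕ, j < ℓ → Z (x₀ - ((n + 1 : ℕ) : ZMod p) * c + (j : ZMod p) * d) := by
        intro j hj
        have := hcross _ c (ih j hj) hc
        rw [show x₀ - ((n + 1 : ℕ) : ZMod p) * c + (j : ZMod p) * d
            = (x₀ - (n : ZMod p) * c + (j : ZMod p) * d) - c by push_cast; ring]
        exact this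
      rcases mono _ hZall with hB | hC
      · exact hB
      · exfalso
        apply step2 _ (hC 0 (by omega))
        have h1 := hC 1 (by omega)
        rw [show x₀ - ((n + 1 : ℕ) : ZMod p) * c + ((1 : ℕ) : ZMod p) * d
            = (x₀ - ((n + 1 : ℕ) : ZMod p) * c + ((0 : ℕ) : ZMod p) * d) + d by
          push_cast; ring] at h1
        exact h1
  haveI : Fact p.Prime := ⟨hp⟩
  have hkey := step3 ((x₀ * c⁻¹).val) 0 (by omega)
  have hvc : (((x₀ * c⁻¹).val : ℕ) : ZMod p) = x₀ * c⁻¹ := ZMod.natCast_rightInverse _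
  rw [hvc, show x₀ - x₀ * c⁻¹ * c + ((0 : ℕ) : ZMod p) * d = x₀ - x₀ * (c⁻¹ * c) by
    push_cast; ring, inv_mul_cancel₀ hc0, mul_one, sub_self] at hkey
  exact h0 ((hpart 0).2 (Or.inl hkey))

lemma core (p : ℕ) (hp : p.Prime) (hp3 : 3 < p) (Z B C : ZMod p → Prop)
    (hpart : ∀ i, Z i ↔ (B i ∨ C i))
    (h0 : ¬ Z 0)
    (hsymZ : ∀ i, Z i → Z (-i))
    (hcross : ∀ b c, B b → C c → Z (b - c))
    (hBne : ∃ b, B b) (hCne : ∃ c, C c)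
    (hnonfull : ∃ n : ZMod p, n ≠ 0 ∧ ¬ Z n) :
    False := by
  haveI : NeZero p := ⟨hp.pos.ne'⟩
  haveI : Fact p.Prime := ⟨hp⟩
  have hcross' : ∀ b c, B b → C c → Z (c - b) := by
    intro b c hb hc
    have := hsymZ _ (hcross b c hb hc)
    rwa [neg_sub] at this
  by_cases hdi : ∃ z e : ZMod p, Z z ∧ Z (z + e) ∧ e ≠ 0 ∧ ¬ Z e
  · -- interval case
    obtain ⟨z, d, hz, hzd, hd0, hdZ⟩ := hdi
    have hdZ' : ¬ Z (-d) := fun h => hdZ (by simpa using hsymZ _ h)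
    classical
    set P : ℕ → Prop := fun l => ∃ x : ZMod p, ∀ j : ℕ, j < l → Z (x + (j : ZMod p) * d)
      with hPdef
    have hP2 : P 2 := by
      refine ⟨z, fun j hj => ?_⟩
      interval_cases j
      · simpa using hz
      · simpa using hzd
    have hPle : ∀ l, P l → l < p := by
      intro l hl
      by_contra hge
      push_neg at hge
      obtain ⟨x, hx⟩ := hl
      have hj : ((-x) * d⁻¹).val < l := lt_of_lt_of_le (ZMod.val_lt _) hge
      have := hx _ hj
      rw [ZMod.natCast_rightInverse, mul_assoc, inv_mul_cancel₀ hd0, mul_one,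
        add_neg_cancel] at this
      exact h0 this
    have h2n : 2 ≤ p - 1 := by omega
    set ℓ := Nat.findGreatest P (p - 1) with hldef
    have hPl : P ℓ := Nat.findGreatest_spec h2n hP2
    have hl2 : 2 ≤ ℓ := Nat.le_findGreatest h2n hP2
    have hnot : ¬ P (ℓ + 1) := by
      rcases le_or_gt (ℓ + 1) (p - 1) with h | h
      · exact Nat.findGreatest_is_greatest (Nat.lt_succ_self ℓ) h
      · intro hPl1
        have := hPle _ hPl1
        have hle : ℓ ≤ p - 1 := Nat.findGreatest_le _
        omega
    obtain ⟨x₀, hx₀⟩ := hPl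
    have hmax : ∀ y : ZMod p, ¬ (∀ j : ℕ, j < ℓ + 1 → Z (y + (j : ZMod p) * d)) := by
      intro y hy
      exact hnot ⟨y, hy⟩
    -- monochromaticity of the maximal interval
    have adjBC : ∀ y, B y → Z (y + d) → B (y + d) := by
      intro y hBy hZyd
      rcases (hpart _).1 hZyd with h | h
      · exact h
      · exact absurd (hcross y (y + d) hBy h) (by
          rw [show y - (y + d) = -d by ring]; exact hdZ')
    have adjCB : ∀ y, C y → Z (y + d) → C (y + d) := by
      intro y hCy hZyd
      rcases (hpart _).1 hZyd with h | h
      · exact absurd (hcross (y + d) y h hCy) (by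
          rw [show y + d - y = d by ring]; exact hdZ)
      · exact h
    have h0x : Z (x₀ + ((0 : ℕ) : ZMod p) * d) := hx₀ 0 (by omega)
    rcases (hpart _).1 h0x with hB | hC
    · -- maximal interval is B-type
      have hLB : ∀ j : ℕ, j < ℓ → B (x₀ + (j : ZMod p) * d) := by
        intro j hj
        induction j with
        | zero => exact hB
        | succ n ih =>
          have hn : n < ℓ := by omega
          have hZ : Z (x₀ + ((n + 1 : ℕ) : ZMod p) * d) := hx₀ _ hj
          have e : x₀ + ((n + 1 : ℕ) : ZMod p) * d = (x₀ + (n : ZMod p) * d) + d := by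
            push_cast; ring
          rw [e] at hZ ⊢
          exact adjBC _ (ih hn) hZ
      exact core_aux p hp Z B C hpart h0 hcross hCne d hd0 hdZ hdZ' ℓ hl2 x₀ hLB hmax
    · -- maximal interval is C-type : swap roles
      have hLC : ∀ j : ℕ, j < ℓ → C (x₀ + (j : ZMod p) * d) := by
        intro j hj
        induction j with
        | zero => exact hC
        | succ n ih =>
          have hn : n < ℓ := by omega
          have hZ : Z (x₀ + ((n + 1 : ℕ) : ZMod p) * d) := hx₀ _ hj
          have e : x₀ + ((n + 1 : ℕ) : ZMod p) * d = (x₀ + (n : ZMod p) * d) + d := by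
            push_cast; ring
          rw [e] at hZ ⊢
          exact adjCB _ (ih hn) hZ
      exact core_aux p hp Z C B (fun i => (hpart i).trans or_comm) h0
        (fun b c hb hc => hcross' c b hc hb) hBne
        d hd0 hdZ hdZ' ℓ hl2 x₀ hLC hmax
  · -- subgroup case
    push_neg at hdi
    have hadd : ∀ a b : ZMod p, Z a → Z b → a + b ≠ 0 → Z (a + b) := by
      intro a b ha hb hab
      have := hdi (-b) (a + b) (hsymZ _ hb) (by rwa [show -b + (a + b) = a by ring]) hab
      exact this
    obtain ⟨b₀, hb₀⟩ := hBne
    have hz₀ : Z b₀ := (hpart _).2 (Or.inl hb₀)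
    have hb₀0 : b₀ ≠ 0 := fun h => h0 (h ▸ hz₀)
    have hmul : ∀ k : ℕ, 1 ≤ k → k < p → Z ((k : ZMod p) * b₀) := by
      intro k
      induction k with
      | zero => omega
      | succ n ih =>
        intro _ hlt
        rcases Nat.eq_or_lt_of_le (Nat.one_le_iff_ne_zero.mpr (Nat.succ_ne_zero n)) with h | h
        · have hn0 : n = 0 := by omega
          subst hn0
          simpa using hz₀
        · have hn1 : 1 ≤ n := by omega
          have hnp : n < p := by omega
          have hZn := ih hn1 hnp
          have hne : ((n + 1 : ℕ) : ZMod p) * b₀ ≠ 0 := by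
            apply mul_ne_zero _ hb₀0
            rw [Ne, ZMod.natCast_eq_zero_iff]
            intro hdvd
            have := Nat.le_of_dvd (by omega) hdvd
            omega
          have := hadd _ _ hZn hz₀ (by
            rwa [show (n : ZMod p) * b₀ + b₀ = ((n + 1 : ℕ) : ZMod p) * b₀ by push_cast; ring])
          rwa [show (n : ZMod p) * b₀ + b₀ = ((n + 1 : ℕ) : ZMod p) * b₀ by push_cast; ring]
            at this
    obtain ⟨n, hn0, hnZ⟩ := hnonfull
    apply hnZ
    have hval : (((n * b₀⁻¹).val : ℕ) : ZMod p) = n * b₀⁻¹ := ZMod.natCast_rightInverse _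
    have hq0 : n * b₀⁻¹ ≠ 0 := mul_ne_zero hn0 (inv_ne_zero hb₀0)
    have hval1 : 1 ≤ (n * b₀⁻¹).val := by
      rcases Nat.eq_zero_or_pos (n * b₀⁻¹).val with h | h
      · exfalso; apply hq0; rw [← hval, h, Nat.cast_zero]
      · exact h
    have := hmul ((n * b₀⁻¹).val) hval1 (ZMod.val_lt _)
    rwa [hval, mul_assoc, inv_mul_cancel₀ hb₀0, mul_one] at this

/-- Let `p > 3` be a prime and `v ∈ 𝔽₂ᵖ` a nonzero symmetric vector with `v ≠ ê`. If `w` is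
any vector such that `ê, v, w` work together, then `w` lies in the span of `ê` and `v`. -/
theorem mem_span_of_work_with_symmetric (p : ℕ) [NeZero p] (hp : p.Prime) (hp3 : 3 < p)
    (v : ZMod p → ZMod 2) (hsym : ∀ i : ZMod p, v i = v (-i))
    (hv0 : v ≠ 0) (hve : v ≠ ehat p)
    (w : ZMod p → ZMod 2) (hwork : WorkTogether3 (ehat p) v w) :
    w ∈ Submodule.span (ZMod 2) ({ehat p, v} : Set (ZMod p → ZMod 2)) := by
  obtain ⟨hv00, hw00⟩ := v0w0 v w hwork
  -- existence of nonzero elements in both classes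
  obtain ⟨e1, he1⟩ : ∃ i : ZMod p, v i = 1 := by
    by_contra hc
    push_neg at hc
    apply hv0
    funext i
    rcases zmod2_cases (v i) with h | h
    · exact h
    · exact absurd h (hc i)
  have he10 : e1 ≠ 0 := by
    intro h
    rw [h, hv00] at he1
    exact absurd he1 (by decide)
  obtain ⟨e0, he00, he0⟩ : ∃ i : ZMod p, i ≠ 0 ∧ v i = 0 := by
    by_contra hc
    push_neg at hc
    apply hve
    funext i
    by_cases hi : i = 0
    · rw [hi, hv00, ehat]; simp
    · have := hc i hi
      rcases zmod2_cases (v i) with h | h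
      · exact absurd h this
      · rw [h, ehat, if_neg hi]
  -- w is constant on each v-class
  have hconst : ∀ s t : ZMod p, s ≠ 0 → t ≠ 0 → v s = v t → w s = w t := by
    intro s t hs ht hvst
    by_contra hwst
    have hst : s ≠ t := fun h => hwst (h ▸ rfl)
    set Z : ZMod p → Prop := fun i => i ≠ 0 ∧ v i = v s with hZdef
    set B : ZMod p → Prop := fun i => Z i ∧ w i = w s with hBdef
    set C : ZMod p → Prop := fun i => Z i ∧ w i ≠ w s with hCdef
    apply core p hp hp3 Z B C
    · intro i
      constructor
      · intro hi
        by_cases hwi : w i = w s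
        · exact Or.inl ⟨hi, hwi⟩
        · exact Or.inr ⟨hi, hwi⟩
      · rintro (⟨hi, _⟩ | ⟨hi, _⟩) <;> exact hi
    · rintro ⟨h, _⟩
      exact h rfl
    · rintro i ⟨hi0, hiv⟩
      exact ⟨neg_ne_zero.mpr hi0, by rw [← hsym i]; exact hiv⟩
    · rintro b c ⟨⟨hb0, hbv⟩, hbw⟩ ⟨⟨hc0, hcv⟩, hcw⟩
      have hbc : b ≠ c := by
        intro h
        rw [h] at hbw
        exact hcw hbw
      constructor
      · intro h
        rw [sub_eq_zero] at h
        exact hbc h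
      · -- v (b - c) = v s, else R1 forces w b = w c
        by_contra hne
        have hvbc : v b = v c := by rw [hbv, hcv]
        have h1 : v (b - c) ≠ v b := by rw [hbv]; exact hne
        have h2 : v (b - c) ≠ v c := by rw [hcv]; exact hne
        have := R1 v w hsym hv00 hw00 hwork b c hb0 hc0 hbc h1 h2
        rw [this] at hbw
        exact hcw hbw
    · exact ⟨s, ⟨hs, rfl⟩, rfl⟩
    · refine ⟨t, ⟨ht, hvst.symm⟩, ?_⟩
      intro h
      exact hwst (h ▸ rfl)
    · -- complement class is nonempty
      rcases zmod2_cases (v s) with h | h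
      · exact ⟨e1, he10, fun hz => by
          have := hz.2; rw [he1, h] at this; exact absurd this (by decide)⟩
      · exact ⟨e0, he00, fun hz => by
          have := hz.2; rw [he0, h] at this; exact absurd this (by decide)⟩
  -- assemble w as a linear combination
  set α := w e0 with hα
  set β := w e1 with hβ
  have hw : w = α • ehat p + (α + β) • v := by
    funext i
    by_cases hi : i = 0
    · rw [hi, hw00]
      show (0 : ZMod 2) = α * ehat p 0 + (α + β) * v 0
      rw [hv00, show ehat p 0 = 0 by rw [ehat]; simp]
      ring
    · show w i = α * ehat p i + (α + β) * v i
      rw [show ehat p i = 1 from if_neg hi]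
      rcases zmod2_cases (v i) with h | h
      · rw [h, hconst i e0 hi he00 (by rw [h, he0]), mul_zero, mul_one, add_zero]
      · rw [h, hconst i e1 hi he10 (by rw [h, he1]), mul_one, mul_one]
        have : ∀ a b : ZMod 2, b = a + (a + b) := by decide
        exact this α β
  rw [hw]
  apply Submodule.add_mem
  · exact Submodule.smul_mem _ _ (Submodule.subset_span (Set.mem_insert _ _))
  · exact Submodule.smul_mem _ _ (Submodule.subset_span
      (Set.mem_insert_of_mem _ (Set.mem_singleton _)))
end
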